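/- There is a bijection between D_{k,n} and the set of non-interval permutations of length k+1, whenever k < ⌊n/2⌋. Consequently d_{k,n} = a_{k+1} for all k < ⌊n/2⌋, where a_m is the number of non-interval permutations of size m. -/

import Mathlib

/-- Vector of consecutive differences of a list. -/
def diffs (l : List ℕ) : List ℕ := List.zipWith (fun a b => b - a) l l.tail

/-- Δ(X): consecutive differences of the increasing enumeration of a finite set. -/
def setDiffs (X : Finset ℕ) : List ℕ := diffs (X.sort (· ≤ ·))

/-- c̄(Δ) = {c, c+d₁, c+d₁+d₂, ...}. -/
def barSet (c : ℕ) (ds : List ℕ) : Finset ℕ :=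
  ((List.range (ds.length + 1)).map (fun j => c + (ds.take j).sum)).toFinset

/-- A finite set (of cardinality ≥ 2) is periodic if its consecutive differences are constant. -/
def PeriodicSet (X : Finset ℕ) : Prop :=
  2 ≤ X.card ∧ ∃ d, 0 < d ∧ setDiffs X = List.replicate (X.card - 1) d

/-- A vector is periodic if all its entries are equal to some positive d. -/
def PerVec (v : List ℕ) : Prop := ∃ d, 0 < d ∧ v = List.replicate v.length d

/-- Membership in D_{|u|,n}: injective word over [n], complement periodic,
no proper nonempty prefix has a periodic complement. -/
def MemD (n : ℕ) (u : List ℕ) : Prop :=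
  u.Nodup ∧ (∀ x ∈ u, x ∈ Finset.Icc 1 n) ∧
  PeriodicSet (Finset.Icc 1 n \ u.toFinset) ∧
  ∀ j, 1 ≤ j → j < u.length → ¬ PeriodicSet (Finset.Icc 1 n \ (u.take j).toFinset)

/-- A list is a permutation word of [n]. -/
def IsPermList (n : ℕ) (s : List ℕ) : Prop :=
  s.length = n ∧ s.Nodup ∧ s.toFinset = Finset.Icc 1 n

/-- s is the inverse permutation word of u (both permutations of [n]). -/
def InvPerm (n : ℕ) (u s : List ℕ) : Prop :=
  IsPermList n u ∧ IsPermList n s ∧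
  ∀ j k, j < n → k < n → (u.getD j 0 = k + 1 ↔ s.getD k 0 = j + 1)

/-- Δ_i(s): consecutive differences of {s_i, ..., s_n} (1-indexed). -/
def deltaVec (s : List ℕ) (i : ℕ) : List ℕ := setDiffs (s.drop (i - 1)).toFinset

/-- One transition of a pyramidal sequence: merge two adjacent entries,
or delete the leftmost, or delete the rightmost entry. -/
def PyrStep (v w : List ℕ) : Prop :=
  (∃ l a b r, v = l ++ a :: b :: r ∧ w = l ++ (a + b) :: r) ∨
  (∃ a r, v = a :: r ∧ w = r) ∨
  (∃ l a, v = l ++ [a] ∧ w = l)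

/-- A pyramidal sequence of vectors of size n, encoded as a list [Δ₁, ..., Δ_{n-1}]. -/
def IsPyramidal (n : ℕ) (P : List (List ℕ)) : Prop :=
  P.length = n - 1 ∧ P.getD 0 [] = List.replicate (n - 1) 1 ∧
  ∀ i, i + 1 < n - 1 → PyrStep (P.getD i []) (P.getD (i + 1) [])

/-- A trapezoidal sequence of height i of size n, encoded as [Δ₁, ..., Δ_{i+1}]:
Δ_{i+1} periodic, Δ_j not periodic for 2 ≤ j ≤ i. -/
def IsTrapezoidal (n i : ℕ) (T : List (List ℕ)) : Prop :=
  T.length = i + 1 ∧ T.getD 0 [] = List.replicate (n - 1) 1 ∧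
  (∀ j, j < i → PyrStep (T.getD j []) (T.getD (j + 1) [])) ∧
  PerVec (T.getD i []) ∧
  ∀ j, 1 ≤ j → j < i → ¬ PerVec (T.getD j [])

/-- Non-interval permutation of [m]: no prefix of length l, 2 ≤ l < m, has as
letter set an interval of consecutive integers. -/
def IsNonIntervalPerm (m : ℕ) (s : List ℕ) : Prop :=
  IsPermList m s ∧ ∀ l, 2 ≤ l → l < m → ¬ ∃ a, (s.take l).toFinset = Finset.Icc a (a + l - 1)

/-- v is obtained from u by a rigid shift of height h by k places to the left:
columns of height < h are untouched and receive nothing; each position of height ≥ h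
receives the excess (over h) of the column k places to its right; every block strictly
above the cut lands on a column of height ≥ h. -/
def RigidShiftL (n h k : ℕ) (u v : List ℕ) : Prop :=
  IsPermList n u ∧ IsPermList n v ∧
  (∀ j, j < n → u.getD j 0 < h → v.getD j 0 = u.getD j 0) ∧
  (∀ j, j < n → h ≤ u.getD j 0 → v.getD j 0 = h + (u.getD (j + k) 0 - h)) ∧
  (∀ j, j < n → h < u.getD j 0 → k ≤ j ∧ h ≤ u.getD (j - k) 0)

/-- Strong shift equivalence: finite sequences of rigid shifts (in either direction). -/
def StrongShiftEq (n : ℕ) (u v : List ℕ) : Prop :=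
  Relation.ReflTransGen (fun a b => ∃ h k, RigidShiftL n h k a b ∨ RigidShiftL n h k b a) u v

/-- Shift equivalence: finite sequences of rigid shifts and reversals. -/
def ShiftEq (n : ℕ) (u v : List ℕ) : Prop :=
  Relation.ReflTransGen
    (fun a b => (∃ h k, RigidShiftL n h k a b ∨ RigidShiftL n h k b a) ∨ b = a.reverse) u v

/-- Super-strong Wilf equivalence of permutation words of [n], characterized by
equality of all Δ_i of the inverses. -/
def SSWilf (n : ℕ) (u v : List ℕ) : Prop :=
  ∃ s t, InvPerm n u s ∧ InvPerm n v t ∧ ∀ i, 1 ≤ i → i ≤ n - 1 → deltaVec s i = deltaVec t i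

lemma diffs_cons2 (x y : ℕ) (t : List ℕ) :
    diffs (x :: y :: t) = (y - x) :: diffs (y :: t) := rfl

lemma diffs_range' (a c d : ℕ) : diffs (List.range' a c d) = List.replicate (c - 1) d := by
  induction c generalizing a with
  | zero => rfl
  | succ c ih =>
    cases c with
    | zero => rfl
    | succ c =>
      rw [List.range'_succ, List.range'_succ, diffs_cons2, ← List.range'_succ]
      rw [ih (a + d)]
      simp [List.replicate_succ]

lemma eq_range'_of_diffs (L : List ℕ) (d : ℕ) (hd : 0 < d)
    (h : diffs L = List.replicate (L.length - 1) d) :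
    L = List.range' (L.headD 0) L.length d := by
  induction L with
  | nil => rfl
  | cons x t ih =>
    cases t with
    | nil => rfl
    | cons y t =>
      rw [diffs_cons2] at h
      simp only [List.length_cons, Nat.add_sub_cancel, List.replicate_succ] at h
      obtain ⟨h1, h2⟩ := List.cons_eq_cons.mp h
      have hy : y = x + d := by omega
      have := ih (by simpa using h2)
      simp only [List.headD_cons] at this ⊢
      show x :: y :: t = List.range' x ((y :: t).length + 1) d
      rw [List.range'_succ, ← hy, ← this]

lemma toFinset_range'_one (a c : ℕ) (hc : 1 ≤ c) :
    (List.range' a c).toFinset = Finset.Icc a (a + c - 1) := by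
  ext x
  rw [List.mem_toFinset, List.mem_range'_1, Finset.mem_Icc]
  omega

lemma sort_Icc (a b : ℕ) (h : a ≤ b) :
    (Finset.Icc a b).sort (· ≤ ·) = List.range' a (b + 1 - a) := by
  have h1 : (List.range' a (b + 1 - a)).toFinset = Finset.Icc a b := by
    rw [toFinset_range'_one a _ (by omega)]
    congr 1
    omega
  rw [← h1]
  rw [List.toFinset_sort (· ≤ ·) (List.nodup_range' (s := a) (n := b + 1 - a))]
  exact (List.pairwise_lt_range' (s := a) (n := b + 1 - a)).imp le_of_lt

lemma periodic_Icc (a b : ℕ) (h : a < b) : PeriodicSet (Finset.Icc a b) := by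
  have hcard : (Finset.Icc a b).card = b + 1 - a := Nat.card_Icc a b
  refine ⟨by omega, 1, one_pos, ?_⟩
  rw [setDiffs, sort_Icc a b (le_of_lt h), diffs_range', hcard]

lemma periodic_structure (n : ℕ) (X : Finset ℕ) (hs : X ⊆ Finset.Icc 1 n)
    (hc : n + 2 ≤ 2 * X.card) (hp : PeriodicSet X) :
    ∃ a, 1 ≤ a ∧ a + (X.card - 1) ≤ n ∧ X = Finset.Icc a (a + (X.card - 1)) := by
  obtain ⟨h2, d, hd, hdiffs⟩ := hp
  set L := X.sort (· ≤ ·) with hL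
  have hlen : L.length = X.card := Finset.length_sort _
  have hrange : L = List.range' (L.headD 0) L.length d := by
    apply eq_range'_of_diffs _ _ hd
    rw [hlen]; exact hdiffs
  set a := L.headD 0 with ha
  set c := X.card with hcdef
  have hmemX : ∀ x ∈ L, x ∈ X := fun x hx => (Finset.mem_sort _).mp hx
  have haX : a ∈ X := by
    apply hmemX
    rw [hrange]
    exact List.mem_range'.mpr ⟨0, by omega, by simp⟩
  have hlastX : a + d * (c - 1) ∈ X := by
    apply hmemX
    rw [hrange]
    exact List.mem_range'.mpr ⟨c - 1, by omega, rfl⟩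
  have ha1 : 1 ≤ a ∧ a ≤ n := Finset.mem_Icc.mp (hs haX)
  have hlast : a + d * (c - 1) ≤ n := (Finset.mem_Icc.mp (hs hlastX)).2
  have hd1 : d = 1 := by
    rcases Nat.lt_or_ge d 2 with h' | h'
    · omega
    · exfalso
      have : 2 * (c - 1) ≤ d * (c - 1) := Nat.mul_le_mul_right _ h'
      omega
  rw [hd1, one_mul] at hlast
  refine ⟨a, ha1.1, by omega, ?_⟩
  have hXL : L.toFinset = X := Finset.sort_toFinset _ _
  rw [← hXL, hrange, hd1, hlen]
  rw [toFinset_range'_one a c (by omega)]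
  congr 1
  omega

lemma periodic_iff_interval (n : ℕ) (X : Finset ℕ) (hs : X ⊆ Finset.Icc 1 n)
    (hc : n + 2 ≤ 2 * X.card) (h2 : 2 ≤ X.card) :
    PeriodicSet X ↔ ∃ c e, c ≤ e ∧ X = Finset.Icc c e := by
  constructor
  · intro hp
    obtain ⟨a, ha1, ha2, hX⟩ := periodic_structure n X hs hc hp
    exact ⟨a, a + (X.card - 1), by omega, hX⟩
  · rintro ⟨c, e, hce, rfl⟩
    have : (Finset.Icc c e).card = e + 1 - c := Nat.card_Icc c e
    exact periodic_Icc c e (by omega)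

def sigmaMap (a m x : ℕ) : ℕ := if x < a then x else x + m

lemma sigmaMap_inj (a m : ℕ) : Function.Injective (sigmaMap a m) := by
  intro x y
  unfold sigmaMap
  split_ifs <;> omega

lemma sigmaMap_image (k m a : ℕ) (ha1 : 1 ≤ a) (ha2 : a ≤ k + 1) (hm : 1 ≤ m) :
    (Finset.Icc 1 (k+1) \ {a}).image (sigmaMap a m)
      = Finset.Icc 1 (k+1+m) \ Finset.Icc a (a+m) := by
  ext y
  simp only [Finset.mem_image, Finset.mem_sdiff, Finset.mem_Icc, Finset.mem_singleton]
  constructor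
  · rintro ⟨x, ⟨⟨hx1, hx2⟩, hxa⟩, rfl⟩
    unfold sigmaMap
    split_ifs <;> omega
  · rintro ⟨⟨hy1, hy2⟩, hy3⟩
    by_cases h : y < a
    · exact ⟨y, ⟨⟨hy1, by omega⟩, by omega⟩, if_pos h⟩
    · refine ⟨y - m, ⟨⟨by omega, by omega⟩, by omega⟩, ?_⟩
      unfold sigmaMap
      split_ifs <;> omega

lemma transfer (n k m a : ℕ) (hn : n = k + 1 + m) (ha1 : 1 ≤ a) (ha2 : a ≤ k + 1)
    (hm : 1 ≤ m) (S : Finset ℕ) (hS : S ⊆ Finset.Icc 1 (k+1)) (haS : a ∉ S) :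
    (∃ c e, c ≤ e ∧ Finset.Icc 1 n \ S.image (sigmaMap a m) = Finset.Icc c e) ↔
    (∃ c e, c ≤ e ∧ Finset.Icc 1 (k+1) \ S = Finset.Icc c e) := by
  subst hn
  have himg : ∀ y, y ∈ S.image (sigmaMap a m) ↔ ∃ x ∈ S, sigmaMap a m x = y := by
    intro y; exact Finset.mem_image
  have hSb : ∀ x ∈ S, 1 ≤ x ∧ x ≤ k + 1 := by
    intro x hx; exact Finset.mem_Icc.mp (hS hx)
  constructor
  · rintro ⟨c, e, hce, hEq⟩
    have hmem : ∀ y, ((1 ≤ y ∧ y ≤ k+1+m) ∧ y ∉ S.image (sigmaMap a m)) ↔ (c ≤ y ∧ y ≤ e) := by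
      intro y
      have := Finset.ext_iff.mp hEq y
      simpa [Finset.mem_sdiff, Finset.mem_Icc] using this
    have hanotim : a ∉ S.image (sigmaMap a m) := by
      rw [himg]
      rintro ⟨x, hxS, hfx⟩
      have := hSb x hxS
      have hxa : x ≠ a := fun h => haS (h ▸ hxS)
      unfold sigmaMap at hfx
      split_ifs at hfx <;> omega
    have hbnotim : a + m ∉ S.image (sigmaMap a m) := by
      rw [himg]
      rintro ⟨x, hxS, hfx⟩
      have hxa : x ≠ a := fun h => haS (h ▸ hxS)
      unfold sigmaMap at hfx
      split_ifs at hfx <;> omega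
    have hca : c ≤ a ∧ a ≤ e := (hmem a).mp ⟨⟨ha1, by omega⟩, hanotim⟩
    have hcb : c ≤ a + m ∧ a + m ≤ e := (hmem (a+m)).mp ⟨⟨by omega, by omega⟩, hbnotim⟩
    have hc1 : 1 ≤ c := ((hmem c).mpr ⟨le_refl c, hce⟩).1.1
    have hen : e ≤ k+1+m := ((hmem e).mpr ⟨hce, le_refl e⟩).1.2
    refine ⟨c, e - m, by omega, ?_⟩
    ext x
    simp only [Finset.mem_sdiff, Finset.mem_Icc]
    constructor
    · rintro ⟨⟨hx1, hx2⟩, hxS⟩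
      have hfx : sigmaMap a m x ∉ S.image (sigmaMap a m) := by
        rw [himg]
        rintro ⟨y, hyS, hfy⟩
        exact hxS (sigmaMap_inj a m hfy ▸ hyS)
      have hfi : 1 ≤ sigmaMap a m x ∧ sigmaMap a m x ≤ k+1+m := by
        unfold sigmaMap; split_ifs <;> omega
      have := (hmem _).mp ⟨hfi, hfx⟩
      unfold sigmaMap at this
      split_ifs at this <;> omega
    · rintro ⟨hcx, hxe⟩
      have hx1 : 1 ≤ x := by omega
      have hxk : x ≤ k + 1 := by omega
      refine ⟨⟨hx1, hxk⟩, ?_⟩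
      intro hxS
      have hfim : sigmaMap a m x ∈ S.image (sigmaMap a m) :=
        Finset.mem_image_of_mem _ hxS
      have : c ≤ sigmaMap a m x ∧ sigmaMap a m x ≤ e := by
        unfold sigmaMap; split_ifs <;> omega
      exact ((hmem _).mpr this).2 hfim
  · rintro ⟨c, e, hce, hEq⟩
    have hmem : ∀ x, ((1 ≤ x ∧ x ≤ k+1) ∧ x ∉ S) ↔ (c ≤ x ∧ x ≤ e) := by
      intro x
      have := Finset.ext_iff.mp hEq x
      simpa [Finset.mem_sdiff, Finset.mem_Icc] using this
    have hca : c ≤ a ∧ a ≤ e := (hmem a).mp ⟨⟨ha1, ha2⟩, haS⟩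
    have hc1 : 1 ≤ c := ((hmem c).mpr ⟨le_refl c, hce⟩).1.1
    have hek : e ≤ k+1 := ((hmem e).mpr ⟨hce, le_refl e⟩).1.2
    refine ⟨c, e + m, by omega, ?_⟩
    ext y
    simp only [Finset.mem_sdiff, Finset.mem_Icc]
    constructor
    · rintro ⟨⟨hy1, hy2⟩, hyim⟩
      rw [himg] at hyim
      push_neg at hyim
      by_cases h1 : y < a
      · have hyS : y ∉ S := by
          intro hyS
          exact (hyim y hyS) (if_pos h1)
        have := (hmem y).mp ⟨⟨hy1, by omega⟩, hyS⟩
        omega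
      · by_cases h2 : y ≤ a + m
        · omega
        · have hyS : y - m ∉ S := by
            intro hyS
            apply hyim (y - m) hyS
            unfold sigmaMap
            split_ifs <;> omega
          have := (hmem (y - m)).mp ⟨⟨by omega, by omega⟩, hyS⟩
          omega
    · rintro ⟨hcy, hye⟩
      refine ⟨⟨by omega, by omega⟩, ?_⟩
      rw [himg]
      rintro ⟨x, hxS, hfx⟩
      have hxb := hSb x hxS
      have hxa : x ≠ a := fun h => haS (h ▸ hxS)
      have : c ≤ x ∧ x ≤ e := by
        unfold sigmaMap at hfx
        split_ifs at hfx <;> omega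
      exact ((hmem x).mpr this).2 hxS

lemma list_toFinset_map (l : List ℕ) (f : ℕ → ℕ) :
    (l.map f).toFinset = l.toFinset.image f := by
  ext y; simp

lemma list_map_eq_self (l : List ℕ) (f : ℕ → ℕ) (h : ∀ x ∈ l, f x = x) : l.map f = l := by
  induction l with
  | nil => rfl
  | cons x t ih =>
    simp only [List.map_cons, h x List.mem_cons_self,
      ih (fun y hy => h y (List.mem_cons_of_mem x hy))]

lemma central (n k m a : ℕ) (hn : n = k + 1 + m) (hm : k + 1 ≤ m) (hk : 1 ≤ k)
    (ha1 : 1 ≤ a) (ha2 : a ≤ k + 1) (w : List ℕ) (hwlen : w.length = k)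
    (hwnd : w.Nodup) (hwf : w.toFinset = Finset.Icc 1 (k+1) \ {a}) :
    ((w.reverse).map (sigmaMap a m)).length = k ∧
    ((w.reverse).map (sigmaMap a m)).Nodup ∧
    ((w.reverse).map (sigmaMap a m)).toFinset = Finset.Icc 1 n \ Finset.Icc a (a+m) ∧
    Finset.Icc 1 n \ ((w.reverse).map (sigmaMap a m)).toFinset = Finset.Icc a (a+m) ∧
    (∀ j, 1 ≤ j → j < k →
      (PeriodicSet (Finset.Icc 1 n \ (((w.reverse).map (sigmaMap a m)).take j).toFinset) ↔
        ∃ c e, c ≤ e ∧ ((a :: w).take (k - j + 1)).toFinset = Finset.Icc c e)) := by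
  have hm1 : 1 ≤ m := by omega
  set u := (w.reverse).map (sigmaMap a m) with hu
  have hulen : u.length = k := by simp [hu, hwlen]
  have hund : u.Nodup := (List.nodup_reverse.mpr hwnd).map (sigmaMap_inj a m)
  have hutf : u.toFinset = Finset.Icc 1 n \ Finset.Icc a (a+m) := by
    rw [hu, list_toFinset_map, List.toFinset_reverse, hwf, hn]
    exact sigmaMap_image k m a ha1 ha2 hm1
  have hIccsub : Finset.Icc a (a+m) ⊆ Finset.Icc 1 n := by
    intro x hx
    simp only [Finset.mem_Icc] at *
    omega
  have hcompl : Finset.Icc 1 n \ u.toFinset = Finset.Icc a (a+m) := by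
    rw [hutf]
    exact Finset.sdiff_sdiff_eq_self hIccsub
  refine ⟨hulen, hund, hutf, hcompl, ?_⟩
  intro j hj1 hjk
  have htake : (u.take j).toFinset = ((w.drop (k-j)).toFinset).image (sigmaMap a m) := by
    rw [hu, ← List.map_take, list_toFinset_map]
    congr 1
    rw [List.take_reverse, List.toFinset_reverse, hwlen]
  have hwmem : ∀ x, x ∈ w.toFinset ↔ (x ∈ Finset.Icc 1 (k+1) ∧ x ≠ a) := by
    intro x; rw [hwf]; simp [Finset.mem_sdiff]
  have haw : a ∉ w.toFinset := by rw [hwmem]; simp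
  have hdropsub : ∀ x, x ∈ (w.drop (k-j)).toFinset → x ∈ w.toFinset := by
    intro x hx
    rw [List.mem_toFinset] at hx ⊢
    exact List.mem_of_mem_drop hx
  have hadrop : a ∉ (w.drop (k-j)).toFinset := fun h => haw (hdropsub a h)
  have hSdsub : (w.drop (k-j)).toFinset ⊆ Finset.Icc 1 (k+1) := by
    intro x hx
    exact ((hwmem x).mp (hdropsub x hx)).1
  have hdropnd : (w.drop (k-j)).Nodup := List.Nodup.sublist (List.drop_sublist _ _) hwnd
  have hSdcard : (w.drop (k-j)).toFinset.card = j := by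
    rw [List.toFinset_card_of_nodup hdropnd, List.length_drop, hwlen]
    omega
  have himcard : ((w.drop (k-j)).toFinset.image (sigmaMap a m)).card = j := by
    rw [Finset.card_image_of_injective _ (sigmaMap_inj a m), hSdcard]
  have himsub : (w.drop (k-j)).toFinset.image (sigmaMap a m) ⊆ Finset.Icc 1 n := by
    have hsub2 : (w.drop (k-j)).toFinset ⊆ Finset.Icc 1 (k+1) \ {a} := by
      rw [← hwf]
      intro x hx
      exact hdropsub x hx
    have h1 := Finset.image_subset_image (f := sigmaMap a m) hsub2
    rw [sigmaMap_image k m a ha1 ha2 hm1, ← hn] at h1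
    exact h1.trans Finset.sdiff_subset
  have hcompcard : (Finset.Icc 1 n \ (u.take j).toFinset).card = n - j := by
    rw [htake, Finset.card_sdiff_of_subset himsub, himcard, Nat.card_Icc]
    omega
  have hsplitw : ∀ x, x ∈ w.toFinset ↔
      x ∈ (w.take (k-j)).toFinset ∨ x ∈ (w.drop (k-j)).toFinset := by
    intro x
    simp only [List.mem_toFinset]
    conv_lhs => rw [← List.take_append_drop (k-j) w]
    exact List.mem_append
  have hdisj : ∀ x, x ∈ (w.take (k-j)).toFinset → x ∈ (w.drop (k-j)).toFinset → False := by
    have h := hwnd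
    rw [← List.take_append_drop (k-j) w, List.nodup_append] at h
    intro x h1 h2
    rw [List.mem_toFinset] at h1 h2
    exact h.2.2 x h1 x h2 rfl
  have hpre : ((a :: w).take (k - j + 1)).toFinset
      = Finset.Icc 1 (k+1) \ (w.drop (k-j)).toFinset := by
    have hstep : (a :: w).take (k - j + 1) = a :: w.take (k-j) := rfl
    rw [hstep]
    ext x
    simp only [List.toFinset_cons, Finset.mem_insert, Finset.mem_sdiff]
    constructor
    · rintro (rfl | hx)
      · exact ⟨Finset.mem_Icc.mpr ⟨ha1, ha2⟩, hadrop⟩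
      · have hxw : x ∈ w.toFinset := (hsplitw x).mpr (Or.inl hx)
        refine ⟨((hwmem x).mp hxw).1, fun hc => hdisj x hx hc⟩
    · rintro ⟨hx1, hx2⟩
      by_cases hxa : x = a
      · exact Or.inl hxa
      · have hxw : x ∈ w.toFinset := (hwmem x).mpr ⟨hx1, hxa⟩
        rcases (hsplitw x).mp hxw with h | h
        · exact Or.inr h
        · exact absurd h hx2
  rw [hpre, htake]
  rw [periodic_iff_interval n _ Finset.sdiff_subset (by rw [← htake, hcompcard]; omega)
    (by rw [← htake, hcompcard]; omega)]
  exact transfer n k m a hn ha1 ha2 hm1 _ hSdsub hadrop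

def rhoMap (a m x : ℕ) : ℕ := if x < a then x else x - m

lemma sigma_rho (a m x : ℕ) (h1 : 1 ≤ x) (h2 : ¬(a ≤ x ∧ x ≤ a + m)) :
    sigmaMap a m (rhoMap a m x) = x := by
  unfold sigmaMap rhoMap
  split_ifs <;> omega

lemma rho_sigma (a m x : ℕ) (h2 : ¬(a ≤ x ∧ x ≤ a + m) ∨ x ≠ a) (hx : x ≤ a ∨ a + m < x + m) :
    rhoMap a m (sigmaMap a m x) = x := by
  unfold sigmaMap rhoMap
  split_ifs <;> omega

lemma rho_sigma' (a m x : ℕ) (hxa : x ≠ a) : rhoMap a m (sigmaMap a m x) = x := by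
  unfold sigmaMap rhoMap
  split_ifs <;> omega

lemma Icc_min_getD (a b : ℕ) (h : a ≤ b) : ((Finset.Icc a b).min).getD 0 = a := by
  have hne : (Finset.Icc a b).Nonempty := ⟨a, Finset.mem_Icc.mpr ⟨le_refl a, h⟩⟩
  have h1 : (Finset.Icc a b).min' hne = a := by
    apply le_antisymm
    · exact Finset.min'_le _ _ (Finset.mem_Icc.mpr ⟨le_refl a, h⟩)
    · exact Finset.le_min' _ _ _ (fun y hy => (Finset.mem_Icc.mp hy).1)
  rw [← Finset.coe_min' hne, h1]
  rfl

lemma interval_bridge (T : Finset ℕ) (l : ℕ) (hl : 1 ≤ l) (hT : T.card = l) :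
    (∃ c e, c ≤ e ∧ T = Finset.Icc c e) ↔ ∃ α, T = Finset.Icc α (α + l - 1) := by
  constructor
  · rintro ⟨c, e, hce, rfl⟩
    have hcard := Nat.card_Icc c e
    refine ⟨c, ?_⟩
    congr 1
    omega
  · rintro ⟨α, rfl⟩
    exact ⟨α, α + l - 1, by omega, rfl⟩

lemma take_toFinset_card (v : List ℕ) (hnd : v.Nodup) (j : ℕ) (hj : j ≤ v.length) :
    ((v.take j).toFinset).card = j := by
  rw [List.toFinset_card_of_nodup (List.Nodup.sublist (List.take_sublist _ _) hnd),
    List.length_take]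
  omega

def MemD' (n : ℕ) (u : List ℕ) : Prop :=
  u.Nodup ∧ (∀ x ∈ u, x ∈ Finset.Icc 1 n) ∧
  PeriodicSet (Finset.Icc 1 n \ u.toFinset) ∧
  ∀ j, 1 ≤ j → j < u.length → ¬ PeriodicSet (Finset.Icc 1 n \ (u.take j).toFinset)

lemma fromD (n k m : ℕ) (hn : n = k + 1 + m) (hm : k + 1 ≤ m) (hk : 1 ≤ k) (u : List ℕ)
    (hlen : u.length = k) (hD : MemD' n u) :
    ∃ (a : ℕ) (w : List ℕ), 1 ≤ a ∧ a ≤ k + 1 ∧ w.length = k ∧ w.Nodup ∧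
      w.toFinset = Finset.Icc 1 (k+1) \ {a} ∧
      u = (w.reverse).map (sigmaMap a m) ∧
      Finset.Icc 1 n \ u.toFinset = Finset.Icc a (a+m) ∧
      u.map (rhoMap a m) = w.reverse := by
  obtain ⟨hnd, hmem, hper, hpre⟩ := hD
  have husub : u.toFinset ⊆ Finset.Icc 1 n := by
    intro x hx
    exact hmem x (List.mem_toFinset.mp hx)
  have hucard : u.toFinset.card = k := by
    rw [List.toFinset_card_of_nodup hnd, hlen]
  have hXcard : (Finset.Icc 1 n \ u.toFinset).card = n - k := by
    rw [Finset.card_sdiff_of_subset husub, hucard, Nat.card_Icc]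
    omega
  obtain ⟨a, ha1, halast, hX⟩ :=
    periodic_structure n _ Finset.sdiff_subset (by rw [hXcard]; omega) hper
  rw [hXcard] at halast hX
  have hnkm : n - k - 1 = m := by omega
  rw [hnkm] at halast hX
  have ha2 : a ≤ k + 1 := by omega
  have hutf : u.toFinset = Finset.Icc 1 n \ Finset.Icc a (a+m) := by
    rw [← hX, Finset.sdiff_sdiff_eq_self husub]
  have humem : ∀ x ∈ u, (1 ≤ x ∧ x ≤ n) ∧ ¬(a ≤ x ∧ x ≤ a + m) := by
    intro x hx
    have : x ∈ u.toFinset := List.mem_toFinset.mpr hx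
    rw [hutf, Finset.mem_sdiff, Finset.mem_Icc] at this
    refine ⟨this.1, ?_⟩
    intro hc
    exact this.2 (Finset.mem_Icc.mpr hc)
  have hsr : ∀ x ∈ u, sigmaMap a m (rhoMap a m x) = x := by
    intro x hx
    exact sigma_rho a m x ((humem x hx).1).1 (humem x hx).2
  refine ⟨a, (u.map (rhoMap a m)).reverse, ha1, ha2, ?_, ?_, ?_, ?_, ?_, ?_⟩
  · simp [hlen]
  · refine List.nodup_reverse.mpr (List.Nodup.map_on ?_ hnd)
    intro x hx y hy hxy
    have := congrArg (sigmaMap a m) hxy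
    rw [hsr x hx, hsr y hy] at this
    exact this
  · rw [List.toFinset_reverse, list_toFinset_map, hutf]
    ext y
    simp only [Finset.mem_image, Finset.mem_sdiff, Finset.mem_Icc, Finset.mem_singleton]
    constructor
    · rintro ⟨x, ⟨⟨hx1, hx2⟩, hx3⟩, rfl⟩
      unfold rhoMap
      split_ifs <;> omega
    · rintro ⟨⟨hy1, hy2⟩, hy3⟩
      by_cases h : y < a
      · exact ⟨y, ⟨⟨hy1, by omega⟩, by omega⟩, if_pos h⟩
      · refine ⟨y + m, ⟨⟨by omega, by omega⟩, by omega⟩, ?_⟩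
        unfold rhoMap; split_ifs <;> omega
  · rw [List.reverse_reverse, List.map_map]
    symm
    apply list_map_eq_self
    intro x hx
    exact hsr x hx
  · exact hX
  · rw [List.reverse_reverse]

def Fmap (n m : ℕ) (u : List ℕ) : List ℕ :=
  ((Finset.Icc 1 n \ u.toFinset).min.getD 0) ::
    (u.map (rhoMap ((Finset.Icc 1 n \ u.toFinset).min.getD 0) m)).reverse

def Gmap (m : ℕ) (s : List ℕ) : List ℕ :=
  ((s.tail).reverse).map (sigmaMap (s.headD 0) m)

lemma insert_Icc_sdiff (a K : ℕ) (ha1 : 1 ≤ a) (ha2 : a ≤ K) :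
    insert a (Finset.Icc 1 K \ {a}) = Finset.Icc 1 K := by
  ext x
  simp only [Finset.mem_insert, Finset.mem_sdiff, Finset.mem_singleton, Finset.mem_Icc]
  constructor
  · rintro (rfl | ⟨h, _⟩)
    · exact ⟨ha1, ha2⟩
    · exact h
  · intro h
    by_cases hx : x = a
    · exact Or.inl hx
    · exact Or.inr ⟨h, hx⟩

lemma forward (n k m : ℕ) (hn : n = k + 1 + m) (hm : k + 1 ≤ m) (hk : 1 ≤ k)
    (u : List ℕ) (hlen : u.length = k) (hD : MemD' n u) :
    IsNonIntervalPerm (k+1) (Fmap n m u) ∧ Gmap m (Fmap n m u) = u := by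
  obtain ⟨a, w, ha1, ha2, hwlen, hwnd, hwf, hueq, hcompl, humap⟩ :=
    fromD n k m hn hm hk u hlen hD
  have hmin : (Finset.Icc 1 n \ u.toFinset).min.getD 0 = a := by
    rw [hcompl]; exact Icc_min_getD _ _ (by omega)
  have hF : Fmap n m u = a :: w := by
    unfold Fmap
    rw [hmin, humap, List.reverse_reverse]
  have hG : Gmap m (a :: w) = u := by
    unfold Gmap
    simp only [List.tail_cons, List.headD_cons]
    exact hueq.symm
  have hc := central n k m a hn hm hk ha1 ha2 w hwlen hwnd hwf
  rw [← hueq] at hc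
  obtain ⟨hulen', hund', hutf', hcompl', hiff⟩ := hc
  have haw : a ∉ w := by
    intro hx
    have : a ∈ w.toFinset := List.mem_toFinset.mpr hx
    rw [hwf] at this
    simp at this
  have hnds : (a :: w).Nodup := List.nodup_cons.mpr ⟨haw, hwnd⟩
  rw [hF, hG]
  refine ⟨⟨⟨by simp [hwlen], hnds, ?_⟩, ?_⟩, rfl⟩
  · rw [List.toFinset_cons, hwf]
    exact insert_Icc_sdiff a (k+1) ha1 ha2
  · intro l hl2 hlk
    rintro ⟨α, hEq⟩
    have hj1 : 1 ≤ k + 1 - l := by omega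
    have hjk : k + 1 - l < k := by omega
    have hkj : k - (k + 1 - l) + 1 = l := by omega
    have hiffj := hiff (k + 1 - l) hj1 hjk
    rw [hkj] at hiffj
    have hcard : ((a :: w).take l).toFinset.card = l :=
      take_toFinset_card _ hnds l (by simp only [List.length_cons, hwlen]; omega)
    have hint := (interval_bridge _ l (by omega) hcard).mpr ⟨α, hEq⟩
    have hper := hiffj.mpr hint
    exact hD.2.2.2 (k + 1 - l) hj1 (by rw [hlen]; omega) hper

lemma backward (n k m : ℕ) (hn : n = k + 1 + m) (hm : k + 1 ≤ m) (hk : 1 ≤ k)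
    (s : List ℕ) (hQ : IsNonIntervalPerm (k+1) s) :
    (Gmap m s).length = k ∧ MemD' n (Gmap m s) ∧ Fmap n m (Gmap m s) = s := by
  obtain ⟨⟨hslen, hsnd, hstf⟩, hNI⟩ := hQ
  match s, hslen with
  | a :: w, hslen =>
  have hwlen : w.length = k := by simpa using hslen
  obtain ⟨haw, hwnd⟩ := List.nodup_cons.mp hsnd
  have haIcc : a ∈ Finset.Icc 1 (k+1) := by
    rw [← hstf]
    simp
  have ha1 : 1 ≤ a := (Finset.mem_Icc.mp haIcc).1
  have ha2 : a ≤ k + 1 := (Finset.mem_Icc.mp haIcc).2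
  have hwf : w.toFinset = Finset.Icc 1 (k+1) \ {a} := by
    ext x
    simp only [Finset.mem_sdiff, Finset.mem_singleton, ← hstf, List.toFinset_cons,
      Finset.mem_insert]
    constructor
    · intro hx
      refine ⟨Or.inr hx, ?_⟩
      rintro rfl
      exact haw (List.mem_toFinset.mp hx)
    · rintro ⟨h | h, hne⟩
      · exact absurd h hne
      · exact h
  have hGs : Gmap m (a :: w) = (w.reverse).map (sigmaMap a m) := rfl
  have hc := central n k m a hn hm hk ha1 ha2 w hwlen hwnd hwf
  obtain ⟨hulen, hund, hutf, hcompl, hiff⟩ := hc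
  rw [hGs]
  refine ⟨hulen, ⟨hund, ?_, ?_, ?_⟩, ?_⟩
  · intro x hx
    have : x ∈ ((w.reverse).map (sigmaMap a m)).toFinset := List.mem_toFinset.mpr hx
    rw [hutf] at this
    exact (Finset.mem_sdiff.mp this).1
  · rw [hcompl]
    exact periodic_Icc a (a+m) (by omega)
  · intro j hj1 hjlt hper
    rw [hulen] at hjlt
    obtain ⟨c, e, hce, hEq⟩ := (hiff j hj1 hjlt).mp hper
    have hcard : ((a :: w).take (k - j + 1)).toFinset.card = k - j + 1 :=
      take_toFinset_card _ hsnd _ (by simp only [List.length_cons, hwlen]; omega)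
    obtain ⟨α, hEq'⟩ := (interval_bridge _ (k - j + 1) (by omega) hcard).mp ⟨c, e, hce, hEq⟩
    exact hNI (k - j + 1) (by omega) (by omega) ⟨α, hEq'⟩
  · have hmin : (Finset.Icc 1 n \ ((w.reverse).map (sigmaMap a m)).toFinset).min.getD 0 = a := by
      rw [hcompl]; exact Icc_min_getD _ _ (by omega)
    unfold Fmap
    rw [hmin]
    congr 1
    rw [List.map_map]
    have : (w.reverse).map (rhoMap a m ∘ sigmaMap a m) = w.reverse := by
      apply list_map_eq_self
      intro x hx
      have hxw : x ∈ w.toFinset := List.mem_toFinset.mpr (List.mem_reverse.mp hx)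
      rw [hwf] at hxw
      have : x ≠ a := by
        simp only [Finset.mem_sdiff, Finset.mem_singleton] at hxw
        exact hxw.2
      exact rho_sigma' a m x this
    rw [this, List.reverse_reverse]

theorem stmt8 (n k : ℕ) (hk1 : 1 ≤ k) (hk : k < n / 2) :
    (∃ f : {u : List ℕ // u.length = k ∧ MemD n u} →
        {s : List ℕ // IsNonIntervalPerm (k + 1) s}, Function.Bijective f) ∧
    Nat.card {u : List ℕ | u.length = k ∧ MemD n u} =
      Nat.card {s : List ℕ | IsNonIntervalPerm (k + 1) s} := by
  obtain ⟨m, hn, hm⟩ : ∃ m, n = k + 1 + m ∧ k + 1 ≤ m := ⟨n - k - 1, by omega, by omega⟩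
  have hD' : ∀ u : List ℕ, MemD n u → MemD' n u := fun u h => h
  have hD'' : ∀ u : List ℕ, MemD' n u → MemD n u := fun u h => h
  let f : {u : List ℕ // u.length = k ∧ MemD n u} →
      {s : List ℕ // IsNonIntervalPerm (k + 1) s} :=
    fun u => ⟨Fmap n m u.1, (forward n k m hn hm hk1 u.1 u.2.1 (hD' _ u.2.2)).1⟩
  let g : {s : List ℕ // IsNonIntervalPerm (k + 1) s} →
      {u : List ℕ // u.length = k ∧ MemD n u} :=
    fun s => ⟨Gmap m s.1, (backward n k m hn hm hk1 s.1 s.2).1,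
      hD'' _ (backward n k m hn hm hk1 s.1 s.2).2.1⟩
  have hleft : Function.LeftInverse g f := by
    intro u
    exact Subtype.ext (forward n k m hn hm hk1 u.1 u.2.1 (hD' _ u.2.2)).2
  have hright : Function.RightInverse g f := by
    intro s
    exact Subtype.ext (backward n k m hn hm hk1 s.1 s.2).2.2
  have hbij : Function.Bijective f :=
    Function.bijective_iff_has_inverse.mpr ⟨g, hleft, hright⟩
  exact ⟨⟨f, hbij⟩, Nat.card_eq_of_bijective f hbij⟩
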